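/- arXiv:1907.08574 — 9 statements merged into one kernel-verified Lean document; each statement's English description precedes it below -/
import Mathlib

section
/- Let n ≥ 1 and let P_1, …, P_n be complex d×d matrices that are orthogonal projections (Hermitian, idempotent), pairwise orthogonal (P_i P_j = 0 for i ≠ j), and satisfy ∑_{i=1}^n P_i = 1. Then for every positive semidefinite d×d matrix ρ, the matrix n·∑_{i=1}^n P_i ρ P_i − ρ is positive semidefinite; equivalently, ρ ≤ n·Δ[ρ] in the Loewner order, where Δ[ρ] = ∑_i P_i ρ P_i. -/
open Matrix
open scoped ComplexOrder

lemma aux_psd_sum {d : ℕ} {ι : Type*} (s : Finset ι) (f : ι → Matrix (Fin d) (Fin d) ℂ)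
    (h : ∀ i ∈ s, (f i).PosSemidef) : (∑ i ∈ s, f i).PosSemidef := by
  induction s using Finset.cons_induction with
  | empty => simpa using Matrix.PosSemidef.zero
  | cons a s ha ih =>
    rw [Finset.sum_cons]
    exact (h a (Finset.mem_cons_self a s)).add (ih fun i hi => h i (Finset.mem_cons_of_mem hi))

lemma aux_psd_real_smul {d : ℕ} {S : Matrix (Fin d) (Fin d) ℂ} (hS : S.PosSemidef)
    (c : ℝ) (hc : 0 ≤ c) : ((c : ℂ) • S).PosSemidef := by
  refine posSemidef_iff_dotProduct_mulVec.mpr ⟨?_, ?_⟩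
  · unfold Matrix.IsHermitian
    rw [conjTranspose_smul, hS.1]
    congr 1
    simp
  · intro x
    have := hS.dotProduct_mulVec_nonneg x
    simp only [smul_mulVec, dotProduct_smul, smul_eq_mul]
    exact mul_nonneg (by exact_mod_cast hc) this

/-- For pairwise orthogonal projections `P 1, …, P n` on `ℂ^d` summing to the
identity and any positive semidefinite `ρ`, the matrix `n • Δ[ρ] - ρ` is positive semidefinite,
where `Δ[ρ] = ∑ i, P i * ρ * P i` is the block-dephasing operation; i.e. `ρ ≤ n • Δ[ρ]`
in the Loewner order. -/
theorem psd_n_smul_dephasing_sub_self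
    (n d : ℕ) (hn : 1 ≤ n) (P : Fin n → Matrix (Fin d) (Fin d) ℂ)
    (hherm : ∀ i, (P i)ᴴ = P i)
    (hidem : ∀ i, P i * P i = P i)
    (horth : ∀ i j, i ≠ j → P i * P j = 0)
    (hsum : ∑ i, P i = 1) :
    ∀ ρ : Matrix (Fin d) (Fin d) ℂ, ρ.PosSemidef →
      ((n : ℂ) • (∑ i, P i * ρ * P i) - ρ).PosSemidef := by
  intro ρ hρ
  set Δ : Matrix (Fin d) (Fin d) ℂ := ∑ i, P i * ρ * P i with hΔ
  set S : Matrix (Fin d) (Fin d) ℂ :=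
    ∑ i, ∑ j, (P i - P j) * ρ * (P i - P j)ᴴ with hSdef
  have hSpsd : S.PosSemidef := by
    refine aux_psd_sum _ _ fun i _ => aux_psd_sum _ _ fun j _ => ?_
    exact hρ.mul_mul_conjTranspose_same _
  have hρeq : ∑ i, ∑ j, P i * ρ * P j = ρ := by
    calc ∑ i, ∑ j, P i * ρ * P j = ∑ i, P i * ρ * (∑ j, P j) := by
          exact Finset.sum_congr rfl fun i _ => by rw [Finset.mul_sum]
      _ = ∑ i, P i * ρ := by rw [hsum]; simp
      _ = (∑ i, P i) * ρ := by rw [Finset.sum_mul]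
      _ = ρ := by rw [hsum, one_mul]
  have hA : ∑ i : Fin n, ∑ j : Fin n, P i * ρ * P i = (n : ℂ) • Δ := by
    rw [hΔ]
    simp [Finset.sum_const, Nat.cast_smul_eq_nsmul, Finset.smul_sum]
  have hB : ∑ i : Fin n, ∑ j : Fin n, P j * ρ * P j = (n : ℂ) • Δ := by
    rw [Finset.sum_comm]
    exact hA
  have hC : ∑ i : Fin n, ∑ j : Fin n, P j * ρ * P i = ρ := by
    rw [Finset.sum_comm]; exact hρeq
  have key : S = (2 : ℂ) • ((n : ℂ) • Δ - ρ) := by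
    have hexpand : ∀ i j : Fin n, (P i - P j) * ρ * (P i - P j)ᴴ =
        P i * ρ * P i - P i * ρ * P j - P j * ρ * P i + P j * ρ * P j := by
      intro i j
      rw [conjTranspose_sub, hherm, hherm]
      noncomm_ring
    rw [hSdef]
    simp only [hexpand]
    rw [Finset.sum_congr rfl fun i _ => Finset.sum_add_distrib,
        Finset.sum_add_distrib,
        Finset.sum_congr rfl fun i _ => Finset.sum_sub_distrib _ _,
        Finset.sum_sub_distrib,
        Finset.sum_congr rfl fun i _ => Finset.sum_sub_distrib _ _,
        Finset.sum_sub_distrib, hA, hB, hC, hρeq]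
    module
  have : ((n : ℂ) • Δ - ρ) = ((2⁻¹ : ℝ) : ℂ) • S := by
    rw [key, smul_smul]
    norm_num
  rw [this]
  exact aux_psd_real_smul hSpsd _ (by norm_num)
end

section
/- Let P_1, …, P_n be pairwise orthogonal projections on ℂ^d (Hermitian, idempotent, P_i P_j = 0 for i ≠ j) with ∑_{i=1}^n P_i = 1, and let ρ be a density matrix on ℂ^d. Then the robustness of block coherence C_rob(ρ, P) := inf { s ≥ 0 : there exists a density matrix δ on ℂ^d with ρ ≤ (1 + s)·Δ[δ] } satisfies C_rob(ρ, P) ≤ n − 1. (In particular the set in the infimum is nonempty, witnessed by s = n − 1 and δ = ρ.) -/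
open Matrix
open scoped ComplexOrder

lemma psd_sum' {d : ℕ} {ι : Type*} (s : Finset ι) (f : ι → Matrix (Fin d) (Fin d) ℂ)
    (hf : ∀ i ∈ s, (f i).PosSemidef) : (∑ i ∈ s, f i).PosSemidef :=
  Finset.sum_induction f _ (fun _ _ ha hb => ha.add hb) Matrix.PosSemidef.zero hf

lemma psd_real_smul {d : ℕ} {M : Matrix (Fin d) (Fin d) ℂ} (hM : M.PosSemidef)
    {c : ℝ} (hc : 0 ≤ c) : (c • M).PosSemidef := by
  refine ⟨?_, fun x => ?_⟩
  · rw [show (c • M) = (c:ℂ) • M by ext i j; simp [Complex.real_smul]]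
    unfold Matrix.IsHermitian
    rw [conjTranspose_smul, hM.1.eq]
    simp
  · have h := hM.2 x
    have : (x.sum fun i xi => x.sum fun j xj => star xi * (c • M) i j * xj)
        = (c : ℂ) • (x.sum fun i xi => x.sum fun j xj => star xi * M i j * xj) := by
      simp only [Finsupp.sum, Finset.smul_sum, Matrix.smul_apply, Complex.real_smul, smul_eq_mul]
      rw [Finset.mul_sum]
      refine Finset.sum_congr rfl fun a _ => ?_
      rw [Finset.mul_sum]
      refine Finset.sum_congr rfl fun b _ => ?_
      ring
    rw [this]
    have hc' : (0:ℂ) ≤ (c:ℂ) := by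
      rw [Complex.le_def]; simp [hc]
    calc (0:ℂ) = (c:ℂ) • (0:ℂ) := by simp
    _ ≤ (c:ℂ) • (x.sum fun i xi => x.sum fun j xj => star xi * M i j * xj) := by
        rw [smul_eq_mul, smul_eq_mul]
        exact mul_le_mul_of_nonneg_left h hc'

/-- For pairwise orthogonal projections `P 1, …, P n` on `ℂ^d` summing to the
identity and a density matrix `ρ`, the robustness of block coherence
`C_rob(ρ, P) = inf { s ≥ 0 : ∃ density matrix δ, ρ ≤ (1 + s) • Δ[δ] }` is at most `n - 1`,
where `Δ[δ] = ∑ i, P i * δ * P i` and `≤` is the Loewner order. -/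
theorem robustness_of_block_coherence_le
    (n d : ℕ) (P : Fin n → Matrix (Fin d) (Fin d) ℂ)
    (hherm : ∀ i, (P i)ᴴ = P i)
    (hidem : ∀ i, P i * P i = P i)
    (horth : ∀ i j, i ≠ j → P i * P j = 0)
    (hsum : ∑ i, P i = 1)
    (ρ : Matrix (Fin d) (Fin d) ℂ) (hρ : ρ.PosSemidef) (hρtr : ρ.trace = 1) :
    sInf { s : ℝ | 0 ≤ s ∧ ∃ δ : Matrix (Fin d) (Fin d) ℂ, δ.PosSemidef ∧ δ.trace = 1 ∧
        ((1 + s) • (∑ i, P i * δ * P i) - ρ).PosSemidef }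
      ≤ (n : ℝ) - 1 := by
  -- n ≥ 1
  have hn : 1 ≤ n := by
    by_contra h
    push_neg at h
    interval_cases n
    have hρ0 : ρ = 0 := by
      rw [← mul_one ρ, ← hsum]
      simp
    rw [hρ0] at hρtr
    simp at hρtr
  set Δ : Matrix (Fin d) (Fin d) ℂ := ∑ i, P i * ρ * P i with hΔ
  -- key algebraic identity
  have key : ∑ i, ∑ j, (P i - P j) * ρ * (P i - P j)
      = (2 * n : ℂ) • Δ - (2:ℂ) • ρ := by
    have hρeq : ∑ i, ∑ j, P i * ρ * P j = ρ := by
      calc ∑ i, ∑ j, P i * ρ * P j = ∑ i, (P i * ρ) * (∑ j, P j) := by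
            simp [Finset.mul_sum]
        _ = ρ := by rw [hsum]; simp [← Finset.sum_mul, hsum]
    have expand : ∀ i j : Fin n, (P i - P j) * ρ * (P i - P j)
        = P i * ρ * P i - P i * ρ * P j - P j * ρ * P i + P j * ρ * P j := by
      intro i j
      noncomm_ring
    simp_rw [expand]
    simp only [Finset.sum_add_distrib, Finset.sum_sub_distrib]
    rw [hρeq]
    have h1 : ∑ i : Fin n, ∑ j : Fin n, P i * ρ * P i = (n:ℂ) • Δ := by
      simp only [Finset.sum_const, Finset.card_univ, Fintype.card_fin, hΔ,
        ← Nat.cast_smul_eq_nsmul ℂ, ← Finset.smul_sum]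
    have h2 : ∑ i : Fin n, ∑ j : Fin n, P j * ρ * P i = ρ := by
      rw [Finset.sum_comm]; exact hρeq
    have h3 : ∑ i : Fin n, ∑ j : Fin n, P j * ρ * P j = (n:ℂ) • Δ := by
      rw [Finset.sum_comm]
      simp only [Finset.sum_const, Finset.card_univ, Fintype.card_fin, hΔ,
        ← Nat.cast_smul_eq_nsmul ℂ, ← Finset.smul_sum]
    rw [h1, h2, h3]
    module
  -- membership
  have hmem : ((n:ℝ) - 1) ∈ { s : ℝ | 0 ≤ s ∧ ∃ δ : Matrix (Fin d) (Fin d) ℂ, δ.PosSemidef ∧ δ.trace = 1 ∧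
        ((1 + s) • (∑ i, P i * δ * P i) - ρ).PosSemidef } := by
    refine ⟨by simp [hn, Nat.one_le_cast.mpr hn], ρ, hρ, hρtr, ?_⟩
    have heq : (1 + ((n:ℝ) - 1)) • Δ - ρ
        = (1/2 : ℝ) • (∑ i, ∑ j, (P i - P j) * ρ * (P i - P j)) := by
      rw [key]
      have : (1 + ((n:ℝ) - 1)) = (n:ℝ) := by ring
      rw [this]
      ext i j
      simp [Complex.real_smul, smul_eq_mul]
      ring
    rw [← hΔ, heq]
    apply psd_real_smul _ (by norm_num)
    apply psd_sum'
    intro i _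
    apply psd_sum'
    intro j _
    have := hρ.mul_mul_conjTranspose_same (P i - P j)
    rwa [conjTranspose_sub, hherm, hherm] at this
  exact csInf_le ⟨0, fun s hs => hs.1⟩ hmem
end

section
/- Let P_1, …, P_n (n ≥ 1) be pairwise orthogonal projections on ℂ^d with ∑_i P_i = 1, and let φ_1, …, φ_n be unit vectors in ℂ^d with P_i φ_i = φ_i for each i. Define the maximally coherent state vector Ψ = (1/√n)·∑_{i=1}^n φ_i. Then ∑_{i ≠ j} ‖ P_i (Ψ Ψ†) P_j ‖₁ = n − 1, where Ψ Ψ† denotes the rank-one matrix with entries Ψ_a · conj(Ψ_b). -/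
open Matrix
open scoped ComplexOrder

/-- The trace norm `‖A‖₁ = tr √(Aᴴ A)` of a complex matrix. -/
noncomputable def traceNorm {m n : Type*} [Fintype m] [Fintype n] [DecidableEq n]
    (A : Matrix m n ℂ) : ℝ :=
  (((Matrix.posSemidef_conjTranspose_mul_self A).1.eigenvectorUnitary : Matrix n n ℂ) *
      diagonal ((fun x : ℝ => (x : ℂ)) ∘ (√·) ∘ (Matrix.posSemidef_conjTranspose_mul_self A).1.eigenvalues) *
      (star ((Matrix.posSemidef_conjTranspose_mul_self A).1.eigenvectorUnitary : Matrix n n ℂ))).trace.re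

lemma vmv_psd {d : ℕ} (r : ℝ) (hr : 0 ≤ r) (y : Fin d → ℂ) :
    Matrix.PosSemidef ((r : ℂ) • vecMulVec y (star y)) := by
  have : (r : ℂ) • vecMulVec y (star y)
      = ((Real.sqrt r : ℂ) • Matrix.replicateRow Unit (star y))ᴴ *
        ((Real.sqrt r : ℂ) • Matrix.replicateRow Unit (star y)) := by
    ext a b
    have : ((Real.sqrt r : ℂ)) ^ 2 = (r : ℂ) := by
      rw [← Complex.ofReal_pow, Real.sq_sqrt hr]
    simp [Matrix.mul_apply, vecMulVec_apply, Matrix.replicateRow_apply, ← Complex.ofReal_mul]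
    rw [← this]
    ring
  rw [this]
  exact posSemidef_conjTranspose_mul_self _

open scoped MatrixOrder in
lemma psd_sqrt_eq {d : ℕ} (B S : Matrix (Fin d) (Fin d) ℂ) (hB : B.PosSemidef) (hS : S.PosSemidef)
    (h : S ^ 2 = B) :
    (hB.1.eigenvectorUnitary : Matrix _ _ ℂ) * diagonal ((fun x : ℝ => (x : ℂ)) ∘ (√·) ∘ hB.1.eigenvalues) *
      star (hB.1.eigenvectorUnitary : Matrix _ _ ℂ) = S := by
  have key : CFC.sqrt B = S := CFC.sqrt_unique (by rw [← pow_two]; exact h) hS.nonneg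
  rw [CFC.sqrt_eq_real_sqrt B hB.nonneg, cfcₙ_eq_cfc, hB.1.cfc_eq] at key
  simpa [IsHermitian.cfc] using key

lemma traceNorm_smul_vmv {d : ℕ} (r : ℝ) (hr : 0 ≤ r) (x y : Fin d → ℂ)
    (hx : star x ⬝ᵥ x = 1) (hy : star y ⬝ᵥ y = 1) :
    traceNorm ((r : ℂ) • vecMulVec x (star y)) = r := by
  set A : Matrix (Fin d) (Fin d) ℂ := (r : ℂ) • vecMulVec x (star y) with hA
  set S : Matrix (Fin d) (Fin d) ℂ := (r : ℂ) • vecMulVec y (star y) with hS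
  have hxx : (∑ c, (starRingEnd ℂ) (x c) * x c) = 1 := by
    simpa [dotProduct] using hx
  have hyy : (∑ c, (starRingEnd ℂ) (y c) * y c) = 1 := by
    simpa [dotProduct] using hy
  have hsq : S ^ 2 = Aᴴ * A := by
    ext a b
    have h1 : (S ^ 2) a b = (r * r) * (y a * (starRingEnd ℂ) (y b)) := by
      simp only [pow_two, hS, Matrix.mul_apply, Matrix.smul_apply, vecMulVec_apply,
        smul_eq_mul, Pi.star_apply, RCLike.star_def]
      calc ∑ c, (r : ℂ) * (y a * (starRingEnd ℂ) (y c)) *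
              ((r : ℂ) * (y c * (starRingEnd ℂ) (y b)))
          = ∑ c, ((starRingEnd ℂ) (y c) * y c) *
              (((r:ℂ)*(r:ℂ)) * (y a * (starRingEnd ℂ) (y b))) :=
            Finset.sum_congr rfl fun c _ => by ring
        _ = ((r:ℂ)*(r:ℂ)) * (y a * (starRingEnd ℂ) (y b)) := by
            rw [← Finset.sum_mul, hyy, one_mul]
    have h2 : (Aᴴ * A) a b = (r * r) * (y a * (starRingEnd ℂ) (y b)) := by
      simp only [hA, Matrix.mul_apply, Matrix.conjTranspose_apply, Matrix.smul_apply,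
        vecMulVec_apply, smul_eq_mul, Pi.star_apply, RCLike.star_def, star_mul', _root_.map_mul,
        Complex.conj_conj, Complex.conj_ofReal]
      calc ∑ c, (r:ℂ) * ((starRingEnd ℂ) (x c) * y a) *
              ((r:ℂ) * (x c * (starRingEnd ℂ) (y b)))
          = ∑ c, ((starRingEnd ℂ) (x c) * x c) *
              (((r:ℂ)*(r:ℂ)) * (y a * (starRingEnd ℂ) (y b))) :=
            Finset.sum_congr rfl fun c _ => by ring
        _ = ((r:ℂ)*(r:ℂ)) * (y a * (starRingEnd ℂ) (y b)) := by
            rw [← Finset.sum_mul, hxx, one_mul]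
    rw [h1, h2]
  have hsqrt : ((Matrix.posSemidef_conjTranspose_mul_self A).1.eigenvectorUnitary : Matrix _ _ ℂ) *
      diagonal ((fun x : ℝ => (x : ℂ)) ∘ (√·) ∘ (Matrix.posSemidef_conjTranspose_mul_self A).1.eigenvalues) *
      (star ((Matrix.posSemidef_conjTranspose_mul_self A).1.eigenvectorUnitary : Matrix _ _ ℂ)) = S :=
    psd_sqrt_eq _ S (Matrix.posSemidef_conjTranspose_mul_self A) (vmv_psd r hr y) hsq
  have htr : S.trace = (r : ℂ) := by
    simp only [hS, Matrix.trace, Matrix.diag_apply, Matrix.smul_apply, vecMulVec_apply,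
      smul_eq_mul, Pi.star_apply, RCLike.star_def]
    calc ∑ a, (r:ℂ) * (y a * (starRingEnd ℂ) (y a))
        = ∑ a, ((starRingEnd ℂ) (y a) * y a) * (r:ℂ) :=
          Finset.sum_congr rfl fun c _ => by ring
      _ = (r:ℂ) := by rw [← Finset.sum_mul, hyy, one_mul]
  rw [traceNorm, hsqrt, htr, Complex.ofReal_re]

lemma sandwich {d : ℕ} (Q R : Matrix (Fin d) (Fin d) ℂ) (u : Fin d → ℂ) (hR : Rᴴ = R) :
    Q * vecMulVec u (star u) * R = vecMulVec (Q.mulVec u) (star (R.mulVec u)) := by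
  have hRe : ∀ e b, (starRingEnd ℂ) (R b e) = R e b := fun e b => congrFun (congrFun hR e) b
  ext a b
  simp only [Matrix.mul_apply, vecMulVec_apply, mulVec, dotProduct, Pi.star_apply,
    RCLike.star_def, _root_.map_sum, _root_.map_mul]
  rw [Finset.sum_mul_sum]
  rw [Finset.sum_comm]
  refine Finset.sum_congr rfl fun e _ => ?_
  rw [Finset.sum_mul]
  refine Finset.sum_congr rfl fun c _ => ?_
  rw [hRe e b]
  ring

/-- For pairwise orthogonal projections `P i` summing to the identity and unit
vectors `φ i` with `P i φ i = φ i`, the maximally coherent state `Ψ = (1/√n) ∑ i, φ i` has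
`ℓ₁`-norm of block coherence `∑_{i ≠ j} ‖P i (Ψ Ψᴴ) P j‖₁ = n - 1`. -/
theorem l1_block_coherence_maximally_coherent_state
    (n d : ℕ) (hn : 1 ≤ n) (P : Fin n → Matrix (Fin d) (Fin d) ℂ)
    (hherm : ∀ i, (P i)ᴴ = P i)
    (hidem : ∀ i, P i * P i = P i)
    (horth : ∀ i j, i ≠ j → P i * P j = 0)
    (hsum : ∑ i, P i = 1)
    (φ : Fin n → (Fin d → ℂ))
    (hunit : ∀ i, star (φ i) ⬝ᵥ φ i = 1)
    (hsupp : ∀ i, (P i).mulVec (φ i) = φ i)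
    (Ψ : Fin d → ℂ) (hΨ : Ψ = ((Real.sqrt n : ℂ))⁻¹ • ∑ i, φ i) :
    ∑ p ∈ (Finset.univ : Finset (Fin n)).offDiag,
        traceNorm (P p.1 * Matrix.vecMulVec Ψ (star Ψ) * P p.2) = (n : ℝ) - 1 := by
  have hn0 : (0 : ℝ) < n := by exact_mod_cast hn
  have hsq : (0 : ℝ) < Real.sqrt n := Real.sqrt_pos.mpr hn0
  -- P i kills φ k for k ≠ i
  have hkill : ∀ i k, i ≠ k → (P i).mulVec (φ k) = 0 := by
    intro i k hik
    rw [← hsupp k, mulVec_mulVec, horth i k hik, zero_mulVec]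
  -- P i Ψ = c • φ i
  have hPΨ : ∀ i, (P i).mulVec Ψ = ((Real.sqrt n : ℂ))⁻¹ • φ i := by
    intro i
    rw [hΨ, mulVec_smul]
    congr 1
    rw [show (P i) *ᵥ (∑ k, φ k) = ∑ k, (P i) *ᵥ (φ k) from by
      exact map_sum ((P i).mulVecLin) φ Finset.univ]
    rw [Finset.sum_eq_single i (fun k _ hk => hkill i k (Ne.symm hk)) (by simp)]
    exact hsupp i
  -- each summand equals 1/n
  have hterm : ∀ p ∈ (Finset.univ : Finset (Fin n)).offDiag,
      traceNorm (P p.1 * Matrix.vecMulVec Ψ (star Ψ) * P p.2) = (n : ℝ)⁻¹ := by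
    rintro ⟨i, j⟩ hp
    have hc : ((Real.sqrt n : ℂ))⁻¹ = (((Real.sqrt n)⁻¹ : ℝ) : ℂ) := by push_cast; ring
    have hM : P i * Matrix.vecMulVec Ψ (star Ψ) * P j
        = (((n : ℝ)⁻¹ : ℝ) : ℂ) • vecMulVec (φ i) (star (φ j)) := by
      rw [sandwich _ _ _ (hherm j), hPΨ i, hPΨ j, hc]
      ext a b
      simp only [vecMulVec_apply, Pi.smul_apply, Pi.star_apply, smul_eq_mul,
        Matrix.smul_apply, _root_.map_mul, Complex.conj_ofReal, RCLike.star_def]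
      rw [show ((((Real.sqrt n)⁻¹ : ℝ) : ℂ)) * φ i a *
          ((((Real.sqrt n)⁻¹ : ℝ) : ℂ) * (starRingEnd ℂ) (φ j b))
          = ((((Real.sqrt n)⁻¹ : ℝ) : ℂ) * (((Real.sqrt n)⁻¹ : ℝ) : ℂ)) *
            (φ i a * (starRingEnd ℂ) (φ j b)) from by ring]
      congr 1
      rw [← Complex.ofReal_mul, ← mul_inv, Real.mul_self_sqrt (le_of_lt hn0)]
    rw [hM, traceNorm_smul_vmv _ (by positivity) _ _ (hunit i) (hunit j)]
  rw [Finset.sum_congr rfl hterm, Finset.sum_const, Finset.offDiag_card, Finset.card_univ,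
    Fintype.card_fin, nsmul_eq_mul]
  have h1 : n ≤ n * n := Nat.le_mul_of_pos_left n (by omega)
  rw [Nat.cast_sub h1]
  push_cast
  field_simp
end

section
/- Let A_1, …, A_n be complex d×d matrices, ψ ∈ ℂ^d a unit vector, and suppose for each i there are a real p_i ≥ 0 and a unit vector φ_i ∈ ℂ^d with A_i ψ = √p_i · φ_i. Then ∑_{i ≠ j} tr( (φ_j φ_i†) · A_i (ψψ†) A_j† ) = ∑_{i ≠ j} √(p_i p_j). Consequently, the dual-feasible matrix X̃ built from the vectors φ_i certifies C_rob(ψψ†, E) ≥ ∑_{i≠j} √(p_i p_j) for the POVM with measurement operators A_i. -/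
open Matrix
open scoped ComplexOrder

lemma aux_mul_vecMulVec {d : ℕ} (M : Matrix (Fin d) (Fin d) ℂ) (a b : Fin d → ℂ) :
    M * Matrix.vecMulVec a b = Matrix.vecMulVec (M.mulVec a) b := by
  ext k l
  simp only [Matrix.mul_apply, Matrix.vecMulVec_apply, Matrix.mulVec, dotProduct,
    Finset.sum_mul]
  exact Finset.sum_congr rfl fun m _ => by ring

lemma aux_vecMulVec_mul_conjTranspose {d : ℕ} (a b : Fin d → ℂ)
    (M : Matrix (Fin d) (Fin d) ℂ) :
    Matrix.vecMulVec a (star b) * Mᴴ = Matrix.vecMulVec a (star (M.mulVec b)) := by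
  ext k l
  simp only [Matrix.mul_apply, Matrix.vecMulVec_apply, Matrix.conjTranspose_apply,
    Matrix.mulVec, dotProduct, Pi.star_apply, star_sum, star_mul', Finset.mul_sum]
  exact Finset.sum_congr rfl fun m _ => by ring

lemma aux_trace_vecMulVec_mul {d : ℕ} (a b c e : Fin d → ℂ) :
    (Matrix.vecMulVec a b * Matrix.vecMulVec c e).trace = (b ⬝ᵥ c) * (e ⬝ᵥ a) := by
  simp only [Matrix.trace, Matrix.diag_apply, Matrix.mul_apply, Matrix.vecMulVec_apply,
    dotProduct, Finset.sum_mul_sum]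
  rw [Finset.sum_comm]
  exact Finset.sum_congr rfl fun k _ => Finset.sum_congr rfl fun m _ => by ring

/-- Let `A 1, …, A n` be matrices and `ψ` a unit vector with
`A i ψ = √(p i) • φ i` for reals `p i ≥ 0` and unit vectors `φ i`. Then
`∑_{i ≠ j} tr((φ j φ iᴴ) · A i (ψψᴴ) A jᴴ) = ∑_{i ≠ j} √(p i * p j)`. -/
theorem dual_certificate_trace_identity_pure_state
    (n d : ℕ) (A : Fin n → Matrix (Fin d) (Fin d) ℂ)
    (ψ : Fin d → ℂ) (hψ : star ψ ⬝ᵥ ψ = 1)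
    (p : Fin n → ℝ) (hp0 : ∀ i, 0 ≤ p i)
    (φ : Fin n → (Fin d → ℂ)) (hφ : ∀ i, star (φ i) ⬝ᵥ φ i = 1)
    (hAψ : ∀ i, (A i).mulVec ψ = ((Real.sqrt (p i) : ℂ)) • φ i) :
    ∑ q ∈ (Finset.univ : Finset (Fin n)).offDiag,
        (Matrix.vecMulVec (φ q.2) (star (φ q.1)) *
          (A q.1 * Matrix.vecMulVec ψ (star ψ) * (A q.2)ᴴ)).trace
      = ((∑ q ∈ (Finset.univ : Finset (Fin n)).offDiag,
          Real.sqrt (p q.1 * p q.2) : ℝ) : ℂ) := by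
  push_cast
  refine Finset.sum_congr rfl fun q _ => ?_
  obtain ⟨i, j⟩ := q
  simp only
  rw [ aux_mul_vecMulVec, hAψ i, aux_vecMulVec_mul_conjTranspose, hAψ j,
    aux_trace_vecMulVec_mul]
  simp only [dotProduct_smul, star_smul, smul_dotProduct]
  rw [hφ i]
  have hj : star (φ j) ⬝ᵥ φ j = 1 := hφ j
  rw [hj, Real.sqrt_mul (hp0 i)]
  simp [smul_eq_mul, Complex.star_def, Complex.conj_ofReal]
end

section
/- Let T be a d'×d complex matrix with T† T = 1 (the d×d identity), and set Π = T T† (a projection on ℂ^{d'}). Let K' be a d'×d' matrix satisfying the subspace-preserving property K' Π = Π K' Π, and define K = T† K' T. Then for every d×d matrix ρ one has T (K ρ K†) T† = K' (T ρ T†) (K')†. In other words, embedding the output of the compressed Kraus operator K agrees with applying K' to the embedded state. -/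
open Matrix

/-- Let `T` be a `d' × d` isometry (`Tᴴ T = 1`), `Π = T Tᴴ` the projector on
the embedded subspace, and `K'` a subspace-preserving operator (`K' Π = Π K' Π`). Then the
compressed Kraus operator `K = Tᴴ K' T` satisfies
`T (K ρ Kᴴ) Tᴴ = K' (T ρ Tᴴ) K'ᴴ` for every `d × d` matrix `ρ`. -/
theorem embed_compressed_kraus_eq
    (d d' : ℕ) (T : Matrix (Fin d') (Fin d) ℂ) (hT : Tᴴ * T = 1)
    (K' : Matrix (Fin d') (Fin d') ℂ)
    (hsp : K' * (T * Tᴴ) = (T * Tᴴ) * K' * (T * Tᴴ))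
    (K : Matrix (Fin d) (Fin d) ℂ) (hK : K = Tᴴ * K' * T) :
    ∀ ρ : Matrix (Fin d) (Fin d) ℂ,
      T * (K * ρ * Kᴴ) * Tᴴ = K' * (T * ρ * Tᴴ) * K'ᴴ := by
  intro ρ
  have hTK : T * K = K' * T := by
    have h1 : T * Tᴴ * T = T := by
      calc T * Tᴴ * T = T * (Tᴴ * T) := by rw [Matrix.mul_assoc]
        _ = T := by rw [hT, Matrix.mul_one]
    calc T * K = T * Tᴴ * K' * T := by
          rw [hK]; simp only [Matrix.mul_assoc]
      _ = T * Tᴴ * K' * (T * Tᴴ * T) := by rw [h1]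
      _ = (T * Tᴴ) * K' * (T * Tᴴ) * T := by simp only [Matrix.mul_assoc]
      _ = K' * (T * Tᴴ) * T := by rw [← hsp]
      _ = K' * T := by rw [Matrix.mul_assoc, h1]
  have hTKH : Kᴴ * Tᴴ = Tᴴ * K'ᴴ := by
    calc Kᴴ * Tᴴ = (T * K)ᴴ := by rw [Matrix.conjTranspose_mul]
      _ = (K' * T)ᴴ := by rw [hTK]
      _ = Tᴴ * K'ᴴ := by rw [Matrix.conjTranspose_mul]
  calc T * (K * ρ * Kᴴ) * Tᴴ = (T * K) * ρ * (Kᴴ * Tᴴ) := by simp only [Matrix.mul_assoc]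
    _ = (K' * T) * ρ * (Tᴴ * K'ᴴ) := by rw [hTK, hTKH]
    _ = K' * (T * ρ * Tᴴ) * K'ᴴ := by simp only [Matrix.mul_assoc]
end

section
/- Let P_1, …, P_n be Hermitian projections on ℂ^{d'} and P̂_1, …, P̂_n be Hermitian projections on ℂ^{d̂'}. Let Q be a d'×d̂' matrix with Q† Q = 1 and P_i Q = Q P̂_i for all i, and let U be a d'×d' unitary with U P_i = P_i U for all i. Suppose K' is a d'×d' matrix and f : {1,…,n} → {1,…,n} a function such that K' P_i = P_{f(i)} K' P_i for all i. Then the matrix K̂ = Q† U K' U† Q on ℂ^{d̂'} satisfies K̂ P̂_i = P̂_{f(i)} K̂ P̂_i for all i; that is, K̂ is block-incoherent with respect to {P̂_i} with the same index function f. -/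
open Matrix

/-- Let `{P i}` and `{P̂ i}` be Hermitian projections on two Naimark spaces,
`Q` an isometry with `P i * Q = Q * P̂ i`, and `U` a unitary commuting with every `P i`. If
`K'` is block-incoherent with index function `f`, i.e. `K' * P i = P (f i) * K' * P i`, then
`K̂ = Qᴴ U K' Uᴴ Q` is block-incoherent with respect to `{P̂ i}` with the same index function:
`K̂ * P̂ i = P̂ (f i) * K̂ * P̂ i`. -/
theorem transported_kraus_block_incoherent
    (n d' e' : ℕ)
    (P : Fin n → Matrix (Fin d') (Fin d') ℂ)
    (Phat : Fin n → Matrix (Fin e') (Fin e') ℂ)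
    (hP : ∀ i, (P i)ᴴ = P i) (hPproj : ∀ i, P i * P i = P i)
    (hPhat : ∀ i, (Phat i)ᴴ = Phat i) (hPhatproj : ∀ i, Phat i * Phat i = Phat i)
    (Q : Matrix (Fin d') (Fin e') ℂ) (hQ : Qᴴ * Q = 1)
    (hQP : ∀ i, P i * Q = Q * Phat i)
    (U : Matrix (Fin d') (Fin d') ℂ) (hU1 : Uᴴ * U = 1) (hU2 : U * Uᴴ = 1)
    (hUP : ∀ i, U * P i = P i * U)
    (K' : Matrix (Fin d') (Fin d') ℂ) (f : Fin n → Fin n)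
    (hinc : ∀ i, K' * P i = P (f i) * K' * P i) :
    ∀ i, (Qᴴ * U * K' * Uᴴ * Q) * Phat i
        = Phat (f i) * (Qᴴ * U * K' * Uᴴ * Q) * Phat i := by
  intro i
  have hUhP : ∀ j, Uᴴ * P j = P j * Uᴴ := fun j => by
    have h := congrArg conjTranspose (hUP j)
    simp only [conjTranspose_mul, hP] at h
    exact h.symm
  have hQhP : ∀ j, Qᴴ * P j = Phat j * Qᴴ := fun j => by
    have h := congrArg conjTranspose (hQP j)
    simp only [conjTranspose_mul, hP, hPhat] at h
    exact h
  simp only [Matrix.mul_assoc]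
  rw [← hQP i, ← Matrix.mul_assoc Uᴴ, hUhP i, Matrix.mul_assoc, ← Matrix.mul_assoc K', hinc i]
  simp only [Matrix.mul_assoc]
  rw [← Matrix.mul_assoc U, hUP, Matrix.mul_assoc, ← Matrix.mul_assoc Qᴴ, hQhP, Matrix.mul_assoc,
    ← Matrix.mul_assoc (P i), ← hUhP i, Matrix.mul_assoc, hQP i]
  simp only [← Matrix.mul_assoc, hPhatproj]
end

section
/- Let T (of size d'×d) and T̂ (of size d̂'×d) satisfy T† T = 1 and T̂† T̂ = 1, let Q (of size d'×d̂') satisfy Q† Q = 1, let U be a d'×d' unitary with Q T̂ = U T, and let K' be a d'×d' matrix with K' (T T†) = (T T†) K' (T T†). Then: (a) T̂† ( Q† U K' U† Q ) T̂ = T† K' T; and (b) for every d̂'×d' matrix M, T̂† ( M (1 − Q Q†) U K' U† Q ) T̂ = 0. -/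
open Matrix

/-- Let `T`, `T̂` be Naimark embedding isometries, `Q` an isometry, `U` a
unitary with `Q T̂ = U T`, and `K'` subspace-preserving (`K' (T Tᴴ) = (T Tᴴ) K' (T Tᴴ)`). Then
(a) `T̂ᴴ (Qᴴ U K' Uᴴ Q) T̂ = Tᴴ K' T`, and
(b) `T̂ᴴ (M (1 - Q Qᴴ) U K' Uᴴ Q) T̂ = 0` for every matrix `M`. -/
theorem compressed_transported_kraus
    (d d' e' : ℕ)
    (T : Matrix (Fin d') (Fin d) ℂ) (hT : Tᴴ * T = 1)
    (That : Matrix (Fin e') (Fin d) ℂ) (hThat : Thatᴴ * That = 1)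
    (Q : Matrix (Fin d') (Fin e') ℂ) (hQ : Qᴴ * Q = 1)
    (U : Matrix (Fin d') (Fin d') ℂ) (hU1 : Uᴴ * U = 1) (hU2 : U * Uᴴ = 1)
    (hQT : Q * That = U * T)
    (K' : Matrix (Fin d') (Fin d') ℂ)
    (hsp : K' * (T * Tᴴ) = (T * Tᴴ) * K' * (T * Tᴴ)) :
    Thatᴴ * (Qᴴ * U * K' * Uᴴ * Q) * That = Tᴴ * K' * T ∧
      ∀ M : Matrix (Fin e') (Fin d') ℂ,
        Thatᴴ * (M * (1 - Q * Qᴴ) * U * K' * Uᴴ * Q) * That = 0 := by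
  have hUQT : Uᴴ * (Q * That) = T := by
    rw [hQT, ← Matrix.mul_assoc, hU1, Matrix.one_mul]
  have hTQU : Thatᴴ * Qᴴ * U = Tᴴ := by
    have h : (Uᴴ * (Q * That))ᴴ = Tᴴ := by rw [hUQT]
    simpa [Matrix.conjTranspose_mul, Matrix.mul_assoc] using h
  have hKT : K' * T = T * (Tᴴ * K' * T) := by
    calc K' * T = K' * (T * Tᴴ) * T := by
          rw [Matrix.mul_assoc K', Matrix.mul_assoc T, hT, Matrix.mul_one]
      _ = (T * Tᴴ) * K' * (T * Tᴴ) * T := by rw [hsp]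
      _ = T * (Tᴴ * K' * T) := by
          simp only [Matrix.mul_assoc, hT, Matrix.mul_one]
  constructor
  · calc Thatᴴ * (Qᴴ * U * K' * Uᴴ * Q) * That
        = (Thatᴴ * Qᴴ * U) * (K' * (Uᴴ * (Q * That))) := by
          simp only [Matrix.mul_assoc]
      _ = Tᴴ * K' * T := by rw [hTQU, hUQT, Matrix.mul_assoc]
  · intro M
    have key : (1 - Q * Qᴴ) * (U * (K' * (Uᴴ * (Q * That)))) = 0 := by
      rw [hUQT, hKT, ← Matrix.mul_assoc U T, hQT.symm]
      calc (1 - Q * Qᴴ) * (Q * That * (Tᴴ * K' * T))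
          = ((1 - Q * Qᴴ) * Q) * (That * (Tᴴ * K' * T)) := by
            simp only [Matrix.mul_assoc]
        _ = 0 := by
            rw [Matrix.sub_mul, Matrix.one_mul, Matrix.mul_assoc, hQ, Matrix.mul_one,
              sub_self, Matrix.zero_mul]
    calc Thatᴴ * (M * (1 - Q * Qᴴ) * U * K' * Uᴴ * Q) * That
        = Thatᴴ * M * ((1 - Q * Qᴴ) * (U * (K' * (Uᴴ * (Q * That))))) := by
          simp only [Matrix.mul_assoc]
      _ = 0 := by rw [key, Matrix.mul_zero]
end

section
/- Let ρ and σ be positive definite d×d complex matrices with tr ρ = 1, let λ ≥ 0, and suppose ρ ≤ 2^λ · σ in the Loewner order. Then the quantum relative entropy satisfies S(ρ‖σ) := tr[ ρ (log₂ ρ − log₂ σ) ] ≤ λ, where log₂ of a positive definite matrix is defined by applying log₂ to its eigenvalues via the functional calculus. -/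
open Matrix
open scoped ComplexOrder

/-- `log₂` of a Hermitian matrix, defined via the spectral decomposition by applying
`Real.logb 2` to the eigenvalues. -/
noncomputable def matLog2 {d : ℕ} (A : Matrix (Fin d) (Fin d) ℂ) (hA : A.IsHermitian) :
    Matrix (Fin d) (Fin d) ℂ :=
  (hA.eigenvectorUnitary : Matrix (Fin d) (Fin d) ℂ) *
    Matrix.diagonal (fun k => (Real.logb 2 (hA.eigenvalues k) : ℂ)) *
    (hA.eigenvectorUnitary : Matrix (Fin d) (Fin d) ℂ)ᴴ

variable {d : ℕ}

lemma trace_form_aux (f g : Fin d → ℝ) (M : Matrix (Fin d) (Fin d) ℂ) :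
    Matrix.trace (Matrix.diagonal ((RCLike.ofReal : ℝ → ℂ) ∘ f) * M *
        Matrix.diagonal ((RCLike.ofReal : ℝ → ℂ) ∘ g) * Mᴴ)
      = ((∑ i, ∑ j, f i * g j * ‖M i j‖ ^ 2 : ℝ) : ℂ) := by
  have hentry : ∀ i, (Matrix.diagonal ((RCLike.ofReal : ℝ → ℂ) ∘ f) * M *
        Matrix.diagonal ((RCLike.ofReal : ℝ → ℂ) ∘ g) * Mᴴ) i i
      = ∑ j, ((f i * g j * ‖M i j‖ ^ 2 : ℝ) : ℂ) := by
    intro i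
    rw [Matrix.mul_apply]
    refine Finset.sum_congr rfl fun j _ => ?_
    simp only [Matrix.mul_diagonal, Matrix.diagonal_mul, Matrix.conjTranspose_apply,
      Function.comp_apply]
    have h : (M i j) * (starRingEnd ℂ) (M i j) = ((‖M i j‖ : ℂ)) ^ 2 := Complex.mul_conj' _
    calc RCLike.ofReal (f i) * M i j * RCLike.ofReal (g j) * star (M i j)
        = RCLike.ofReal (f i) * RCLike.ofReal (g j) * ((M i j) * (starRingEnd ℂ) (M i j)) := by
          ring_nf; rfl
      _ = ((f i * g j * ‖M i j‖ ^ 2 : ℝ) : ℂ) := by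
          rw [h, show (RCLike.ofReal : ℝ → ℂ) = Complex.ofReal from rfl]
          push_cast; ring
  rw [Matrix.trace]
  rw [show ((∑ i, ∑ j, f i * g j * ‖M i j‖ ^ 2 : ℝ) : ℂ)
      = ∑ i, ∑ j, ((f i * g j * ‖M i j‖ ^ 2 : ℝ) : ℂ) by push_cast; rfl]
  exact Finset.sum_congr rfl fun i _ => hentry i

lemma trace_form (U W : Matrix (Fin d) (Fin d) ℂ)
    (hU : U ∈ Matrix.unitaryGroup (Fin d) ℂ) (hW : W ∈ Matrix.unitaryGroup (Fin d) ℂ)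
    (f g : Fin d → ℝ) :
    Matrix.trace ((U * Matrix.diagonal ((RCLike.ofReal : ℝ → ℂ) ∘ f) * star U) *
        (W * Matrix.diagonal ((RCLike.ofReal : ℝ → ℂ) ∘ g) * star W))
      = ((∑ i, ∑ j, f i * g j * ‖(star U * W) i j‖ ^ 2 : ℝ) : ℂ) := by
  have hUU : star U * U = 1 := Matrix.mem_unitaryGroup_iff'.mp hU
  have hUU' : U * star U = 1 := Matrix.mem_unitaryGroup_iff.mp hU
  have hWW' : W * star W = 1 := Matrix.mem_unitaryGroup_iff.mp hW
  set M := star U * W with hM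
  have hMH : Mᴴ = star W * U := by
    rw [Matrix.star_eq_conjTranspose] at *
    rw [hM, Matrix.conjTranspose_mul, Matrix.conjTranspose_conjTranspose]
  have hmat : (U * Matrix.diagonal ((RCLike.ofReal : ℝ → ℂ) ∘ f) * star U) *
        (W * Matrix.diagonal ((RCLike.ofReal : ℝ → ℂ) ∘ g) * star W)
      = U * (Matrix.diagonal ((RCLike.ofReal : ℝ → ℂ) ∘ f) * M *
          Matrix.diagonal ((RCLike.ofReal : ℝ → ℂ) ∘ g) * Mᴴ) * star U := by
    rw [hMH, hM]
    simp only [Matrix.mul_assoc, hUU']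
    simp only [Matrix.mul_one]
  rw [hmat, Matrix.trace_mul_cycle, hUU, Matrix.one_mul, trace_form_aux]

lemma row_sum_sq {M : Matrix (Fin d) (Fin d) ℂ} (h : M * Mᴴ = 1) (i : Fin d) :
    ∑ j, ‖M i j‖ ^ 2 = 1 := by
  have h2 := congrFun (congrFun (congrArg (fun A => fun a b => A a b) h) i) i
  simp only [Matrix.mul_apply, Matrix.conjTranspose_apply, Matrix.one_apply_eq] at h2
  have h3 : (((∑ j, ‖M i j‖ ^ 2 : ℝ)) : ℂ) = 1 := by
    rw [← h2]
    push_cast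
    refine Finset.sum_congr rfl fun j _ => ?_
    rw [← Complex.mul_conj']
    rfl
  exact_mod_cast h3

lemma psd_trace_re_nonneg {A : Matrix (Fin d) (Fin d) ℂ} (hA : A.PosSemidef) :
    0 ≤ A.trace.re := by
  rw [Matrix.trace, Complex.re_sum]
  refine Finset.sum_nonneg fun i _ => ?_
  have := hA.re_dotProduct_nonneg (Pi.single i 1)
  simpa [dotProduct, Matrix.mulVec, Pi.single_apply, Finset.sum_ite_eq] using this

lemma trace_mul_psd_re_nonneg {A B : Matrix (Fin d) (Fin d) ℂ}
    (hA : A.PosSemidef) (hB : B.PosSemidef) : 0 ≤ (A * B).trace.re := by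
  obtain ⟨S, hS, hSH⟩ : ∃ S : Matrix (Fin d) (Fin d) ℂ, S * S = B ∧ S.IsHermitian :=
    by open scoped MatrixOrder in
      exact ⟨CFC.sqrt B, CFC.sqrt_mul_sqrt_self B hB.nonneg, (CFC.sqrt_nonneg B).posSemidef.1⟩
  have h1 : (A * B).trace = (S * A * S).trace := by
    rw [← hS, ← Matrix.mul_assoc, Matrix.trace_mul_cycle]
  rw [h1]
  refine psd_trace_re_nonneg ?_
  have := hA.mul_mul_conjTranspose_same S
  rwa [hSH.eq] at this

lemma trace_sq_inv_le {ρ τ : Matrix (Fin d) (Fin d) ℂ}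
    (hρ : ρ.PosDef) (hτ : τ.PosDef) (hle : (τ - ρ).PosSemidef) :
    ((ρ * ρ * τ⁻¹).trace).re ≤ ρ.trace.re := by
  obtain ⟨T, hT2, hTH⟩ : ∃ T : Matrix (Fin d) (Fin d) ℂ, T * T = τ ∧ T.IsHermitian :=
    by open scoped MatrixOrder in
      exact ⟨CFC.sqrt τ, CFC.sqrt_mul_sqrt_self τ hτ.posSemidef.nonneg,
        (CFC.sqrt_nonneg τ).posSemidef.1⟩
  have hdetτ : τ.det ≠ 0 := hτ.det_pos.ne'
  have hdet : IsUnit T.det := by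
    rw [isUnit_iff_ne_zero]
    intro h
    apply hdetτ
    rw [← hT2, Matrix.det_mul, h, mul_zero]
  have hTi : T⁻¹ * T = 1 := Matrix.nonsing_inv_mul _ hdet
  have hTi' : T * T⁻¹ = 1 := Matrix.mul_nonsing_inv _ hdet
  have hTiH : (T⁻¹).IsHermitian := hTH.inv
  have hτinv : τ⁻¹ = T⁻¹ * T⁻¹ := by rw [← hT2, Matrix.mul_inv_rev]
  set K := T⁻¹ * ρ * T⁻¹ with hKdef
  have hK : K.PosSemidef := by
    have := hρ.posSemidef.mul_mul_conjTranspose_same T⁻¹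
    rwa [hTiH.eq] at this
  have h1K : (1 - K).PosSemidef := by
    have h := hle.mul_mul_conjTranspose_same T⁻¹
    rw [hTiH.eq] at h
    have heq : T⁻¹ * (τ - ρ) * T⁻¹ = 1 - K := by
      rw [Matrix.mul_sub, Matrix.sub_mul, hKdef, ← hT2]
      congr 1
      calc T⁻¹ * (T * T) * T⁻¹ = (T⁻¹ * T) * (T * T⁻¹) := by
            simp only [Matrix.mul_assoc]
        _ = 1 := by rw [hTi, hTi', Matrix.one_mul]
    rwa [heq] at h
  obtain ⟨R, hR2, hRH⟩ : ∃ R : Matrix (Fin d) (Fin d) ℂ, R * R = K ∧ R.IsHermitian :=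
    by open scoped MatrixOrder in
      exact ⟨CFC.sqrt K, CFC.sqrt_mul_sqrt_self K hK.nonneg, (CFC.sqrt_nonneg K).posSemidef.1⟩
  have hKK : (K - K * K).PosSemidef := by
    have h := h1K.mul_mul_conjTranspose_same R
    rw [hRH.eq] at h
    have heq : R * (1 - K) * R = K - K * K := by
      rw [Matrix.mul_sub, Matrix.mul_one, Matrix.sub_mul, hR2, ← hR2]
      congr 1
      calc R * (R * R) * R = (R * R) * (R * R) := by simp only [Matrix.mul_assoc]
      _ = (R * R) * (R * R) := rfl
    rwa [heq] at h
  have htr : 0 ≤ ((K - K * K) * τ).trace.re := trace_mul_psd_re_nonneg hKK hτ.posSemidef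
  have hKτ : (K * τ).trace = ρ.trace := by
    rw [hKdef, ← hT2]
    have : T⁻¹ * ρ * T⁻¹ * (T * T) = T⁻¹ * (ρ * T) := by
      simp only [Matrix.mul_assoc, Matrix.nonsing_inv_mul_cancel_left _ _ hdet]
    rw [this, Matrix.trace_mul_comm, Matrix.mul_assoc, hTi', Matrix.mul_one]
  have hKKτ : (K * K * τ).trace = (ρ * ρ * τ⁻¹).trace := by
    rw [hKdef, hτinv, ← hT2]
    have : T⁻¹ * ρ * T⁻¹ * (T⁻¹ * ρ * T⁻¹) * (T * T)
        = T⁻¹ * (ρ * (T⁻¹ * T⁻¹) * ρ * T) := by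
      simp only [Matrix.mul_assoc, Matrix.nonsing_inv_mul_cancel_left _ _ hdet]
    rw [this, Matrix.trace_mul_comm]
    have h2 : ρ * (T⁻¹ * T⁻¹) * ρ * T * T⁻¹ = ρ * (T⁻¹ * T⁻¹) * ρ := by
      rw [Matrix.mul_assoc _ T T⁻¹, hTi', Matrix.mul_one]
    rw [h2, Matrix.trace_mul_cycle]
  have hexp : ((K - K * K) * τ).trace = ρ.trace - (ρ * ρ * τ⁻¹).trace := by
    rw [Matrix.sub_mul, Matrix.trace_sub, hKτ, hKKτ]
  rw [hexp, Complex.sub_re] at htr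
  linarith

lemma key_real (p q : Fin d → ℝ) (c : Fin d → Fin d → ℝ) (l : ℝ)
    (hp : ∀ i, 0 < p i) (hq : ∀ j, 0 < q j) (hc : ∀ i j, 0 ≤ c i j)
    (hrow : ∀ i, ∑ j, c i j = 1) (hptr : ∑ i, p i = 1)
    (hX : ∑ i, ∑ j, (p i) ^ 2 * (((2:ℝ) ^ l * q j)⁻¹) * c i j ≤ 1) :
    (∑ i, p i * Real.logb 2 (p i)) - ∑ i, ∑ j, p i * Real.logb 2 (q j) * c i j ≤ l := by
  have h2pos : (0:ℝ) < (2:ℝ) ^ l := Real.rpow_pos_of_pos two_pos l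
  have hlog2 : (0:ℝ) < Real.log 2 := Real.log_pos one_lt_two
  set t : Fin d → ℝ := fun j => (2:ℝ) ^ l * q j with ht
  have htpos : ∀ j, 0 < t j := fun j => mul_pos h2pos (hq j)
  have key : ∀ i j, Real.log (p i / t j)
      = Real.logb 2 (p i) * Real.log 2 - Real.logb 2 (q j) * Real.log 2 - l * Real.log 2 := by
    intro i j
    rw [Real.log_div (hp i).ne' (htpos j).ne', ht]
    rw [Real.log_mul h2pos.ne' (hq j).ne', Real.log_rpow two_pos]
    rw [Real.logb, Real.logb, div_mul_cancel₀ _ hlog2.ne', div_mul_cancel₀ _ hlog2.ne']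
    ring
  have hS : ((∑ i, p i * Real.logb 2 (p i)) - (∑ i, ∑ j, p i * Real.logb 2 (q j) * c i j) - l)
        * Real.log 2
      = ∑ i, ∑ j, c i j * p i * Real.log (p i / t j) := by
    have h1 : ∑ i, p i * Real.logb 2 (p i)
        = ∑ i, ∑ j, c i j * (p i * Real.logb 2 (p i)) := by
      refine Finset.sum_congr rfl fun i _ => ?_
      rw [← Finset.sum_mul, hrow, one_mul]
    have h2 : l = ∑ i, ∑ j, c i j * (p i * l) := by
      have : ∀ i, ∑ j, c i j * (p i * l) = p i * l := by
        intro i; rw [← Finset.sum_mul, hrow, one_mul]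
      rw [Finset.sum_congr rfl fun i _ => this i, ← Finset.sum_mul, hptr, one_mul]
    calc ((∑ i, p i * Real.logb 2 (p i)) - (∑ i, ∑ j, p i * Real.logb 2 (q j) * c i j) - l)
          * Real.log 2
        = ((∑ i, ∑ j, c i j * (p i * Real.logb 2 (p i)))
            - (∑ i, ∑ j, p i * Real.logb 2 (q j) * c i j)
            - ∑ i, ∑ j, c i j * (p i * l)) * Real.log 2 := by rw [← h1, ← h2]
      _ = ∑ i, ∑ j, (c i j * (p i * Real.logb 2 (p i)) - p i * Real.logb 2 (q j) * c i j
            - c i j * (p i * l)) * Real.log 2 := by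
          rw [← Finset.sum_sub_distrib, ← Finset.sum_sub_distrib, Finset.sum_mul]
          refine Finset.sum_congr rfl fun i _ => ?_
          rw [← Finset.sum_sub_distrib, ← Finset.sum_sub_distrib, Finset.sum_mul]
      _ = ∑ i, ∑ j, c i j * p i * Real.log (p i / t j) := by
          refine Finset.sum_congr rfl fun i _ => Finset.sum_congr rfl fun j _ => ?_
          rw [key i j]; ring
  have hbound : ∑ i, ∑ j, c i j * p i * Real.log (p i / t j)
      ≤ (∑ i, ∑ j, (p i) ^ 2 * ((t j)⁻¹) * c i j) - 1 := by
    have step1 : ∑ i, ∑ j, c i j * p i * Real.log (p i / t j)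
        ≤ ∑ i, ∑ j, c i j * p i * (p i / t j - 1) := by
      refine Finset.sum_le_sum fun i _ => Finset.sum_le_sum fun j _ => ?_
      exact mul_le_mul_of_nonneg_left
        (Real.log_le_sub_one_of_pos (div_pos (hp i) (htpos j)))
        (mul_nonneg (hc i j) (hp i).le)
    have step2 : ∑ i, ∑ j, c i j * p i * (p i / t j - 1)
        = (∑ i, ∑ j, (p i) ^ 2 * ((t j)⁻¹) * c i j) - 1 := by
      have hterm : ∀ i j, c i j * p i * (p i / t j - 1)
          = (p i) ^ 2 * ((t j)⁻¹) * c i j - p i * c i j := by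
        intro i j; rw [div_eq_mul_inv]; ring
      have hpc : ∑ i, ∑ j, p i * c i j = 1 := by
        rw [Finset.sum_congr rfl fun i _ => ?_]
        · exact hptr
        · rw [← Finset.mul_sum, hrow, mul_one]
      calc ∑ i, ∑ j, c i j * p i * (p i / t j - 1)
          = ∑ i, ∑ j, ((p i) ^ 2 * ((t j)⁻¹) * c i j - p i * c i j) := by
            exact Finset.sum_congr rfl fun i _ => Finset.sum_congr rfl fun j _ => hterm i j
        _ = (∑ i, ∑ j, (p i) ^ 2 * ((t j)⁻¹) * c i j) - ∑ i, ∑ j, p i * c i j := by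
            rw [← Finset.sum_sub_distrib]
            exact Finset.sum_congr rfl fun i _ => by rw [← Finset.sum_sub_distrib]
        _ = (∑ i, ∑ j, (p i) ^ 2 * ((t j)⁻¹) * c i j) - 1 := by rw [hpc]
    linarith
  have hfin : ((∑ i, p i * Real.logb 2 (p i))
      - (∑ i, ∑ j, p i * Real.logb 2 (q j) * c i j) - l) * Real.log 2 ≤ 0 := by
    rw [hS]
    have : (∑ i, ∑ j, (p i) ^ 2 * ((t j)⁻¹) * c i j) - 1 ≤ 0 := by
      rw [ht]; simpa using sub_nonpos.mpr hX
    linarith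
  nlinarith [hfin, hlog2]

/-- If `ρ` and `σ` are positive definite, `tr ρ = 1`, `λ ≥ 0`, and
`ρ ≤ 2^λ • σ` in the Loewner order, then the quantum relative entropy satisfies
`S(ρ‖σ) = tr[ρ (log₂ ρ - log₂ σ)] ≤ λ`. -/
theorem relative_entropy_le_of_le_rpow_smul
    (d : ℕ) (ρ σ : Matrix (Fin d) (Fin d) ℂ)
    (hρ : ρ.PosDef) (hσ : σ.PosDef) (hρtr : ρ.trace = 1)
    (l : ℝ) (hl : 0 ≤ l)
    (hle : (((2 : ℝ) ^ l) • σ - ρ).PosSemidef) :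
    (ρ * (matLog2 ρ hρ.1 - matLog2 σ hσ.1)).trace.re ≤ l := by
  set U : Matrix (Fin d) (Fin d) ℂ := (hρ.1.eigenvectorUnitary : Matrix (Fin d) (Fin d) ℂ) with hUdef
  set W : Matrix (Fin d) (Fin d) ℂ := (hσ.1.eigenvectorUnitary : Matrix (Fin d) (Fin d) ℂ) with hWdef
  set p : Fin d → ℝ := hρ.1.eigenvalues with hpdef
  set q : Fin d → ℝ := hσ.1.eigenvalues with hqdef
  have hU : U ∈ Matrix.unitaryGroup (Fin d) ℂ := hρ.1.eigenvectorUnitary.2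
  have hW : W ∈ Matrix.unitaryGroup (Fin d) ℂ := hσ.1.eigenvectorUnitary.2
  have hUU : star U * U = 1 := Matrix.mem_unitaryGroup_iff'.mp hU
  have hUU' : U * star U = 1 := Matrix.mem_unitaryGroup_iff.mp hU
  have hWW : star W * W = 1 := Matrix.mem_unitaryGroup_iff'.mp hW
  have hWW' : W * star W = 1 := Matrix.mem_unitaryGroup_iff.mp hW
  set c : Fin d → Fin d → ℝ := fun i j => ‖(star U * W) i j‖ ^ 2 with hcdef
  have hρspec : ρ = U * Matrix.diagonal ((RCLike.ofReal : ℝ → ℂ) ∘ p) * star U :=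
    hρ.1.spectral_theorem
  have hσspec : σ = W * Matrix.diagonal ((RCLike.ofReal : ℝ → ℂ) ∘ q) * star W :=
    hσ.1.spectral_theorem
  have hL1 : matLog2 ρ hρ.1
      = U * Matrix.diagonal ((RCLike.ofReal : ℝ → ℂ) ∘ fun k => Real.logb 2 (p k)) * star U :=
    rfl
  have hL2 : matLog2 σ hσ.1
      = W * Matrix.diagonal ((RCLike.ofReal : ℝ → ℂ) ∘ fun k => Real.logb 2 (q k)) * star W :=
    rfl
  -- sum of eigenvalues of ρ is 1
  have hpsum : ∑ i, p i = 1 := by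
    have h : ρ.trace = ((∑ i, p i : ℝ) : ℂ) := by
      conv_lhs => rw [hρspec]
      rw [Matrix.trace_mul_cycle, hUU, Matrix.one_mul, Matrix.trace_diagonal]
      push_cast
      rfl
    rw [hρtr] at h
    exact_mod_cast h.symm
  -- the three trace computations
  have h1 : (ρ * matLog2 ρ hρ.1).trace = ((∑ i, p i * Real.logb 2 (p i) : ℝ) : ℂ) := by
    rw [hL1]
    conv_lhs => rw [hρspec]
    rw [trace_form U U hU hU p (fun k => Real.logb 2 (p k))]
    congr 1
    rw [hUU]
    refine Finset.sum_congr rfl fun i _ => ?_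
    rw [Finset.sum_eq_single i]
    · simp [Matrix.one_apply]
    · intro j _ hji
      simp [Matrix.one_apply, Ne.symm hji]
    · intro h; exact absurd (Finset.mem_univ i) h
  have h2 : (ρ * matLog2 σ hσ.1).trace
      = ((∑ i, ∑ j, p i * Real.logb 2 (q j) * c i j : ℝ) : ℂ) := by
    rw [hL2]
    conv_lhs => rw [hρspec]
    rw [trace_form U W hU hW p (fun k => Real.logb 2 (q k))]
  -- τ and its inverse
  set τ : Matrix (Fin d) (Fin d) ℂ := ((2 : ℝ) ^ l) • σ with hτdef
  have hτPD : τ.PosDef := by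
    have := Matrix.PosDef.posSemidef_add hle hρ
    rwa [sub_add_cancel] at this
  have h2pos : (0:ℝ) < (2:ℝ) ^ l := Real.rpow_pos_of_pos two_pos l
  have hτspec : τ = W * Matrix.diagonal ((RCLike.ofReal : ℝ → ℂ) ∘ fun j => (2:ℝ) ^ l * q j)
      * star W := by
    rw [hτdef]
    conv_lhs => rw [hσspec]
    rw [← Matrix.smul_mul, ← Matrix.mul_smul, ← Matrix.diagonal_smul]
    have hfun : (2:ℝ) ^ l • ((RCLike.ofReal : ℝ → ℂ) ∘ q)
        = (RCLike.ofReal : ℝ → ℂ) ∘ (fun j => (2:ℝ) ^ l * q j) := by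
      funext j
      simp only [Pi.smul_apply, Function.comp_apply, RCLike.real_smul_eq_coe_mul]
      norm_cast
    rw [hfun]
  have hτinv : τ⁻¹ = W * Matrix.diagonal ((RCLike.ofReal : ℝ → ℂ)
      ∘ fun j => ((2:ℝ) ^ l * q j)⁻¹) * star W := by
    apply Matrix.inv_eq_right_inv
    rw [hτspec]
    have hdd : Matrix.diagonal ((RCLike.ofReal : ℝ → ℂ) ∘ fun j => (2:ℝ) ^ l * q j)
        * Matrix.diagonal ((RCLike.ofReal : ℝ → ℂ) ∘ fun j => ((2:ℝ) ^ l * q j)⁻¹)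
        = 1 := by
      rw [Matrix.diagonal_mul_diagonal]
      have hone : (fun i => ((RCLike.ofReal : ℝ → ℂ) ∘ fun j => (2:ℝ) ^ l * q j) i
          * ((RCLike.ofReal : ℝ → ℂ) ∘ fun j => ((2:ℝ) ^ l * q j)⁻¹) i)
          = fun _ => (1:ℂ) := by
        funext j
        simp only [Function.comp_apply]
        simp only [show (RCLike.ofReal : ℝ → ℂ) = Complex.ofReal from rfl]
        rw [← Complex.ofReal_mul, mul_inv_cancel₀ (mul_pos h2pos (hσ.eigenvalues_pos j)).ne']
        norm_cast
      rw [hone, Matrix.diagonal_one]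
    calc W * Matrix.diagonal ((RCLike.ofReal : ℝ → ℂ) ∘ fun j => (2:ℝ) ^ l * q j) * star W
          * (W * Matrix.diagonal ((RCLike.ofReal : ℝ → ℂ) ∘ fun j => ((2:ℝ) ^ l * q j)⁻¹)
            * star W)
        = W * (Matrix.diagonal ((RCLike.ofReal : ℝ → ℂ) ∘ fun j => (2:ℝ) ^ l * q j)
            * ((star W * W)
            * (Matrix.diagonal ((RCLike.ofReal : ℝ → ℂ) ∘ fun j => ((2:ℝ) ^ l * q j)⁻¹)
              * star W))) := by
          simp only [Matrix.mul_assoc]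
      _ = 1 := by
          rw [hWW, Matrix.one_mul, ← Matrix.mul_assoc
            (Matrix.diagonal ((RCLike.ofReal : ℝ → ℂ) ∘ fun j => (2:ℝ) ^ l * q j)) _ _, hdd,
            Matrix.one_mul, hWW']
  have hρsq : ρ * ρ = U * Matrix.diagonal ((RCLike.ofReal : ℝ → ℂ) ∘ fun i => p i ^ 2)
      * star U := by
    conv_lhs => rw [hρspec]
    have h : (U * Matrix.diagonal ((RCLike.ofReal : ℝ → ℂ) ∘ p) * star U)
          * (U * Matrix.diagonal ((RCLike.ofReal : ℝ → ℂ) ∘ p) * star U)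
        = U * (Matrix.diagonal ((RCLike.ofReal : ℝ → ℂ) ∘ p)
            * ((star U * U) * (Matrix.diagonal ((RCLike.ofReal : ℝ → ℂ) ∘ p) * star U))) := by
      simp only [Matrix.mul_assoc]
    rw [h, hUU, Matrix.one_mul,
      ← Matrix.mul_assoc (Matrix.diagonal ((RCLike.ofReal : ℝ → ℂ) ∘ p)) _ _,
      Matrix.diagonal_mul_diagonal,
      show (fun i => ((RCLike.ofReal : ℝ → ℂ) ∘ p) i * ((RCLike.ofReal : ℝ → ℂ) ∘ p) i)
          = (RCLike.ofReal : ℝ → ℂ) ∘ fun i => p i ^ 2 from by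
        funext i
        simp only [Function.comp_apply]
        simp only [show (RCLike.ofReal : ℝ → ℂ) = Complex.ofReal from rfl]
        norm_cast
        exact (sq (p i)).symm,
      ← Matrix.mul_assoc]
  have h3 : (ρ * ρ * τ⁻¹).trace
      = ((∑ i, ∑ j, p i ^ 2 * (((2:ℝ) ^ l * q j)⁻¹) * c i j : ℝ) : ℂ) := by
    rw [hρsq, hτinv, trace_form U W hU hW]
  have hXle : ∑ i, ∑ j, p i ^ 2 * (((2:ℝ) ^ l * q j)⁻¹) * c i j ≤ 1 := by
    have h := trace_sq_inv_le hρ hτPD hle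
    rw [h3, hρtr] at h
    rwa [Complex.ofReal_re, Complex.one_re] at h
  -- final assembly
  rw [Matrix.mul_sub, Matrix.trace_sub, Complex.sub_re, h1, h2, Complex.ofReal_re,
    Complex.ofReal_re]
  exact key_real p q c l (fun i => hρ.eigenvalues_pos i) (fun j => hσ.eigenvalues_pos j)
    (fun i j => sq_nonneg _)
    (fun i => row_sum_sq (by
      rw [Matrix.star_eq_conjTranspose, Matrix.conjTranspose_mul,
        Matrix.conjTranspose_conjTranspose, ← Matrix.star_eq_conjTranspose,
        ← Matrix.star_eq_conjTranspose]
      calc star U * W * (star W * U) = star U * (W * star W) * U := by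
            simp only [Matrix.mul_assoc]
        _ = 1 := by rw [hWW', Matrix.mul_one, hUU]) i)
    hpsum hXle
end

section
/- Let ρ be a density matrix on ℂ^d, let A_1, …, A_n be d×d matrices with ∑_i A_i† A_i = 1, let s ≥ 0, and let τ be a density matrix on ℂ^d ⊗ ℂ^n with block decomposition τ = ∑_{i,j} τ_{i,j} ⊗ |i⟩⟨j| satisfying s·τ_{i,j} = −A_i ρ A_j† for all i ≠ j. Then the matrices δ_i := (A_i ρ A_i† + s·τ_{i,i}) / (1 + s) are each positive semidefinite, ∑_{i=1}^n tr δ_i = 1, and ∑_{i,j} (A_i ρ A_j† + s·τ_{i,j}) ⊗ |i⟩⟨j| = (1 + s)·∑_i δ_i ⊗ |i⟩⟨i|. -/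
open Matrix Kronecker
open scoped ComplexOrder

private lemma psd_add {m : Type*} [Fintype m] {M N : Matrix m m ℂ}
    (hM : M.PosSemidef) (hN : N.PosSemidef) : (M + N).PosSemidef := by
  refine ⟨hM.1.add hN.1, fun x => ?_⟩
  exact (hM.add hN).2 x

private lemma psd_rsmul {m : Type*} [Fintype m] {M : Matrix m m ℂ} (r : ℝ) (hr : 0 ≤ r)
    (hM : M.PosSemidef) : (r • M).PosSemidef := by
  have h : r • M = (r : ℂ) • M := by
    ext a b; simp [Complex.real_smul]
  rw [h]
  refine ⟨?_, fun x => ?_⟩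
  · rw [Matrix.IsHermitian, Matrix.conjTranspose_smul, hM.1.eq]
    congr 1
    simp
  · exact (hM.smul (by exact_mod_cast hr : (0:ℂ) ≤ (r:ℂ))).2 x

/-- Let `ρ` be a density matrix, `A 1, …, A n` measurement operators with
`∑ i, A iᴴ A i = 1`, `s ≥ 0`, and `τ` a density matrix on `ℂ^d ⊗ ℂ^n` whose blocks satisfy
`s • τ i j = -(A i ρ A jᴴ)` for all `i ≠ j`. Then the matrices
`δ i = (1 + s)⁻¹ • (A i ρ A iᴴ + s • τ i i)` are positive semidefinite, their traces sum
to `1`, and `∑ i j, (A i ρ A jᴴ + s • τ i j) ⊗ |i⟩⟨j| = (1 + s) • ∑ i, δ i ⊗ |i⟩⟨i|`. -/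
theorem sdp_diagonal_constraint_redundant
    (n d : ℕ) (ρ : Matrix (Fin d) (Fin d) ℂ) (hρ : ρ.PosSemidef) (hρtr : ρ.trace = 1)
    (A : Fin n → Matrix (Fin d) (Fin d) ℂ) (hA : ∑ i, (A i)ᴴ * A i = 1)
    (s : ℝ) (hs : 0 ≤ s)
    (τ : Matrix (Fin d × Fin n) (Fin d × Fin n) ℂ)
    (hτ : τ.PosSemidef) (hτtr : τ.trace = 1)
    (τb : Fin n → Fin n → Matrix (Fin d) (Fin d) ℂ)
    (hτb : ∀ i j, τb i j = Matrix.of fun a b => τ (a, i) (b, j))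
    (hoff : ∀ i j, i ≠ j → s • τb i j = -(A i * ρ * (A j)ᴴ))
    (δ : Fin n → Matrix (Fin d) (Fin d) ℂ)
    (hδ : ∀ i, δ i = (1 + s)⁻¹ • (A i * ρ * (A i)ᴴ + s • τb i i)) :
    (∀ i, (δ i).PosSemidef) ∧ (∑ i, (δ i).trace = 1) ∧
      ∑ i, ∑ j, (A i * ρ * (A j)ᴴ + s • τb i j) ⊗ₖ Matrix.single i j (1 : ℂ)
        = (1 + s) • ∑ i, (δ i) ⊗ₖ Matrix.single i i (1 : ℂ) := by
  have h1s : (1 : ℝ) + s ≠ 0 := by positivity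
  have hτbii : ∀ i, (τb i i).PosSemidef := by
    intro i
    rw [hτb]
    exact hτ.submatrix (fun a => (a, i))
  constructor
  · intro i
    rw [hδ i]
    exact psd_rsmul _ (by positivity)
      (psd_add (hρ.mul_mul_conjTranspose_same (A i)) (psd_rsmul s hs (hτbii i)))
  constructor
  · -- trace part
    have htrA : ∑ i, (A i * ρ * (A i)ᴴ).trace = 1 := by
      calc ∑ i, (A i * ρ * (A i)ᴴ).trace
          = ∑ i, ((A i)ᴴ * A i * ρ).trace := by
            refine Finset.sum_congr rfl fun i _ => ?_
            rw [Matrix.trace_mul_cycle]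
        _ = ((∑ i, (A i)ᴴ * A i) * ρ).trace := by
            rw [Finset.sum_mul, Matrix.trace_sum]
        _ = 1 := by rw [hA, Matrix.one_mul, hρtr]
    have htrτ : ∑ i, (τb i i).trace = 1 := by
      rw [← hτtr]
      simp only [Matrix.trace, Matrix.diag, hτb]
      rw [Fintype.sum_prod_type]
      rw [Finset.sum_comm]
      simp
    calc ∑ i, (δ i).trace
        = (1 + s)⁻¹ • (∑ i, (A i * ρ * (A i)ᴴ).trace + s • ∑ i, (τb i i).trace) := by
          simp only [hδ, Matrix.trace_smul, Matrix.trace_add, ← Finset.smul_sum,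
            Finset.sum_add_distrib]
      _ = 1 := by
          rw [htrA, htrτ]
          simp only [Complex.real_smul, Complex.ofReal_inv]
          push_cast
          field_simp
  · -- Kronecker identity
    have hdiag : ∀ i, A i * ρ * (A i)ᴴ + s • τb i i = (1 + s) • δ i := by
      intro i
      rw [hδ i, smul_smul, mul_inv_cancel₀ h1s, one_smul]
    rw [Finset.smul_sum]
    refine Finset.sum_congr rfl fun i _ => ?_
    rw [Finset.sum_eq_single i]
    · rw [hdiag i, Matrix.smul_kronecker]
    · intro j _ hj
      rw [hoff i j (Ne.symm hj), add_neg_cancel, Matrix.zero_kronecker]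
    · intro h
      exact absurd (Finset.mem_univ i) h
end
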